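/- Let p/q have negative continued fraction expansion [a_1, ..., a_n] with all a_i ≥ 2. The total number of terms produced by Riemenschneider's dual expansion is l^ν = Σ_{i=1}^{n}(a_i - 1) - n + 1, i.e. the length of the expansion of p/(p-q) equals (a_1 - 1) + Σ_{i=2}^{n}(a_i - 2). -/

import Mathlib

/-- Evaluation of a negative (Hirzebruch–Jung) continued fraction. -/
def ncfEval : List ℤ → ℚ
  | [] => 0
  | [a] => (a : ℚ)
  | a :: rest => (a : ℚ) - 1 / ncfEval rest

/-- `L` is the negative continued fraction expansion of `r` with all coefficients `≥ 2`. -/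
def IsNCF (r : ℚ) (L : List ℤ) : Prop :=
  L ≠ [] ∧ (∀ a ∈ L, 2 ≤ a) ∧ ncfEval L = r

lemma ncfEval_singleton (a : ℤ) : ncfEval [a] = (a : ℚ) := rfl

lemma ncfEval_cons (a : ℤ) (M : List ℤ) (h : M ≠ []) :
    ncfEval (a :: M) = (a : ℚ) - 1 / ncfEval M := by
  cases M with
  | nil => exact absurd rfl h
  | cons b t => rfl

lemma one_lt_ncfEval : ∀ L : List ℤ, L ≠ [] → (∀ a ∈ L, 2 ≤ a) → 1 < ncfEval L
  | [], h, _ => absurd rfl h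
  | [a], _, h2 => by
      have ha : (2:ℚ) ≤ (a:ℚ) := by exact_mod_cast h2 a (by simp)
      rw [ncfEval_singleton]; linarith
  | a :: b :: t, _, h2 => by
      have ht := one_lt_ncfEval (b :: t) (by simp)
        (fun x hx => h2 x (List.mem_cons_of_mem _ hx))
      have ha : (2:ℚ) ≤ (a:ℚ) := by exact_mod_cast h2 a (by simp)
      rw [ncfEval_cons a (b :: t) (by simp)]
      have h0 : 0 < ncfEval (b :: t) := lt_trans one_pos ht
      have h1 : 1 / ncfEval (b :: t) < 1 := by rw [div_lt_one h0]; exact ht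
      have h2' : 0 < 1 / ncfEval (b :: t) := by positivity
      linarith

lemma ncfEval_cons_bounds (a : ℤ) (M : List ℤ) (hM : M ≠ []) (h2 : ∀ x ∈ M, 2 ≤ x) :
    (a:ℚ) - 1 < ncfEval (a :: M) ∧ ncfEval (a :: M) < a := by
  have ht := one_lt_ncfEval M hM h2
  have h0 : 0 < ncfEval M := lt_trans one_pos ht
  have h1 : 1 / ncfEval M < 1 := by rw [div_lt_one h0]; exact ht
  have h2' : 0 < 1 / ncfEval M := by positivity
  rw [ncfEval_cons a M hM]
  constructor <;> linarith

lemma ncf_unique : ∀ L M : List ℤ, (∀ a ∈ L, 2 ≤ a) → (∀ a ∈ M, 2 ≤ a) →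
    L ≠ [] → M ≠ [] → ncfEval L = ncfEval M → L = M
  | [a], [b], _, _, _, _, h => by
      have : (a:ℚ) = (b:ℚ) := h
      have : a = b := by exact_mod_cast this
      rw [this]
  | [a], b :: c :: t, _, hM, _, _, h => by
      have hb := ncfEval_cons_bounds b (c :: t) (by simp)
        (fun x hx => hM x (List.mem_cons_of_mem _ hx))
      rw [← h, ncfEval_singleton] at hb
      have h1 : (b:ℚ) - 1 < (a:ℚ) := hb.1
      have h2 : (a:ℚ) < (b:ℚ) := hb.2
      have : b - 1 < a := by exact_mod_cast h1
      have : a < b := by exact_mod_cast h2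
      omega
  | a :: c :: t, [b], hL, _, _, _, h => by
      have hb := ncfEval_cons_bounds a (c :: t) (by simp)
        (fun x hx => hL x (List.mem_cons_of_mem _ hx))
      rw [h, ncfEval_singleton] at hb
      have : a - 1 < b := by exact_mod_cast hb.1
      have : b < a := by exact_mod_cast hb.2
      omega
  | a :: c :: s, b :: d :: t, hL, hM, _, _, h => by
      have hLt : ∀ x ∈ c :: s, 2 ≤ x := fun x hx => hL x (List.mem_cons_of_mem _ hx)
      have hMt : ∀ x ∈ d :: t, 2 ≤ x := fun x hx => hM x (List.mem_cons_of_mem _ hx)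
      have hb1 := ncfEval_cons_bounds a (c :: s) (by simp) hLt
      have hb2 := ncfEval_cons_bounds b (d :: t) (by simp) hMt
      rw [h] at hb1
      have hab : a = b := by
        have h1 : (a:ℚ) - 1 < (b:ℚ) := lt_trans hb1.1 hb2.2
        have h2 : (b:ℚ) - 1 < (a:ℚ) := lt_trans hb2.1 hb1.2
        have h1' : a - 1 < b := by exact_mod_cast h1
        have h2' : b - 1 < a := by exact_mod_cast h2
        omega
      subst hab
      have h1 : 0 < ncfEval (c :: s) := lt_trans one_pos (one_lt_ncfEval _ (by simp) hLt)
      have h2 : 0 < ncfEval (d :: t) := lt_trans one_pos (one_lt_ncfEval _ (by simp) hMt)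
      rw [ncfEval_cons a (c :: s) (by simp), ncfEval_cons a (d :: t) (by simp)] at h
      have hev : ncfEval (c :: s) = ncfEval (d :: t) := by
        have hd : 1 / ncfEval (c :: s) = 1 / ncfEval (d :: t) := by linarith
        have := (div_eq_div_iff (ne_of_gt h1) (ne_of_gt h2)).mp hd
        linarith
      have := ncf_unique (c :: s) (d :: t) hLt hMt (by simp) (by simp) hev
      rw [this]

lemma ncfEval_head_add (c : ℤ) (t : List ℤ) :
    ncfEval ((c + 1) :: t) = ncfEval (c :: t) + 1 := by
  cases t with
  | nil => rw [ncfEval_singleton, ncfEval_singleton]; push_cast; ring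
  | cons d u =>
      rw [ncfEval_cons (c + 1) (d :: u) (by simp), ncfEval_cons c (d :: u) (by simp)]
      push_cast; ring

lemma ncfEval_replicate : ∀ k : ℕ,
    ncfEval (List.replicate (k + 1) 2) = ((k:ℚ) + 2) / ((k:ℚ) + 1)
  | 0 => by norm_num [ncfEval_singleton]
  | (k + 1) => by
      have ih := ncfEval_replicate k
      rw [List.replicate_succ, ncfEval_cons 2 _ (by simp), ih]
      have hk : ((k:ℚ) + 1) ≠ 0 := by positivity
      have hk2 : ((k:ℚ) + 2) ≠ 0 := by positivity
      field_simp
      push_cast; ring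

lemma two_len_le_sum : ∀ L : List ℤ, (∀ a ∈ L, 2 ≤ a) → 2 * (L.length : ℤ) ≤ L.sum
  | [], _ => by simp
  | a :: t, h => by
      have ih := two_len_le_sum t (fun x hx => h x (List.mem_cons_of_mem _ hx))
      have ha := h a (by simp)
      simp only [List.sum_cons, List.length_cons]
      push_cast
      linarith

lemma exists_dual : ∀ (n : ℕ) (A : List ℤ), A.sum.toNat ≤ n → A ≠ [] →
    (∀ a ∈ A, 2 ≤ a) →
    ∃ C : List ℤ, C ≠ [] ∧ (∀ a ∈ C, 2 ≤ a) ∧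
      ncfEval C = ncfEval A / (ncfEval A - 1) ∧
      (C.length : ℤ) = A.sum - 2 * A.length + 1 := by
  intro n
  induction n with
  | zero =>
      intro A hs hne h2
      exfalso
      have h1 := two_len_le_sum A h2
      have hl : A.length ≠ 0 := fun h => hne (List.length_eq_zero_iff.mp h)
      omega
  | succ n ih =>
      intro A hs hne h2
      match A with
      | [a] =>
          have ha : 2 ≤ a := h2 a (by simp)
          refine ⟨List.replicate (a - 1).toNat 2, ?_, ?_, ?_, ?_⟩
          · intro hcon
            have := congrArg List.length hcon
            simp only [List.length_replicate, List.length_nil] at this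
            omega
          · intro x hx
            rw [List.eq_of_mem_replicate hx]
          · obtain ⟨k, hk⟩ : ∃ k : ℕ, (a - 1).toNat = k + 1 := by
              refine ⟨(a - 2).toNat, by omega⟩
            rw [hk, ncfEval_replicate k, ncfEval_singleton]
            have hka : (k : ℚ) = (a : ℚ) - 2 := by
              have : (k : ℤ) = a - 2 := by omega
              exact_mod_cast congrArg (fun x : ℤ => (x : ℚ)) this
            rw [hka]; ring_nf
          · simp only [List.length_replicate, List.sum_cons, List.sum_nil,
              List.length_cons, List.length_nil]
            push_cast
            omega
      | a :: b :: t =>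
          have hLt : ∀ x ∈ b :: t, 2 ≤ x := fun x hx => h2 x (List.mem_cons_of_mem _ hx)
          have ha : 2 ≤ a := h2 a (by simp)
          have htpos : 1 < ncfEval (b :: t) := one_lt_ncfEval _ (by simp) hLt
          rcases eq_or_lt_of_le ha with hae | ha3
          · -- a = 2 : dual is (head+1) :: tail of dual of (b :: t)
            have hsum : (b :: t).sum.toNat ≤ n := by
              have h1 := two_len_le_sum (b :: t) hLt
              simp only [List.sum_cons, List.length_cons] at h1 hs ⊢
              push_cast at h1
              omega
            obtain ⟨C', hC'ne, hC'2, hC'ev, hC'len⟩ := ih (b :: t) hsum (by simp) hLt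
            match C' with
            | c :: u =>
              refine ⟨(c + 1) :: u, by simp, ?_, ?_, ?_⟩
              · intro x hx
                rcases List.mem_cons.mp hx with h | h
                · have := hC'2 c (by simp); omega
                · exact hC'2 x (List.mem_cons_of_mem _ h)
              · rw [ncfEval_head_add, hC'ev]
                set s := ncfEval (b :: t) with hsdef
                have hs1 : s - 1 ≠ 0 := by
                  intro h; rw [sub_eq_zero] at h; rw [h] at htpos; exact lt_irrefl 1 htpos
                have hs0 : s ≠ 0 := by
                  intro h; rw [h] at htpos; norm_num at htpos
                rw [← hae, ncfEval_cons 2 (b :: t) (by simp), ← hsdef]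
                push_cast
                have e1 : (2:ℚ) - 1 / s = (2 * s - 1) / s := by
                  field_simp
                have e2 : (2:ℚ) - 1 / s - 1 = (s - 1) / s := by
                  field_simp; ring
                rw [e2, e1, div_div_div_eq, mul_comm s (s - 1),
                  mul_div_mul_right _ _ hs0, div_add' _ _ _ hs1]
                congr 1
                ring
              · simp only [List.length_cons, List.sum_cons] at hC'len ⊢
                push_cast at hC'len ⊢
                rw [← hae]
                linarith
          · -- a ≥ 3 : dual is 2 :: dual of ((a-1) :: b :: t)
            have hA' : ∀ x ∈ (a - 1) :: b :: t, 2 ≤ x := by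
              intro x hx
              rcases List.mem_cons.mp hx with h | h
              · omega
              · exact hLt x h
            have hsum : ((a - 1) :: b :: t).sum.toNat ≤ n := by
              have h1 := two_len_le_sum (b :: t) hLt
              simp only [List.sum_cons, List.length_cons] at h1 hs ⊢
              push_cast at h1
              omega
            obtain ⟨C', hC'ne, hC'2, hC'ev, hC'len⟩ := ih ((a - 1) :: b :: t) hsum (by simp) hA'
            refine ⟨2 :: C', by simp, ?_, ?_, ?_⟩
            · intro x hx
              rcases List.mem_cons.mp hx with h | h
              · omega
              · exact hC'2 x h
            · have hr' : ncfEval ((a - 1) :: b :: t) = ncfEval (a :: b :: t) - 1 := by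
                rw [ncfEval_cons (a - 1) (b :: t) (by simp),
                  ncfEval_cons a (b :: t) (by simp)]
                push_cast; ring
              have hbound := ncfEval_cons_bounds a (b :: t) (by simp) hLt
              have hr2 : 2 < ncfEval (a :: b :: t) := by
                have : (3:ℚ) ≤ (a:ℚ) := by exact_mod_cast ha3
                have := hbound.1
                linarith
              rw [ncfEval_cons 2 C' hC'ne, hC'ev, hr']
              set r := ncfEval (a :: b :: t) with hrdef
              have h1 : r - 1 ≠ 0 := by intro h; rw [sub_eq_zero] at h; rw [h] at hr2; linarith
              have h3 : r - 2 ≠ 0 := by intro h; rw [sub_eq_zero] at h; rw [h] at hr2; linarith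
              push_cast
              rw [show r - 1 - 1 = r - 2 from by ring, one_div_div]
              rw [eq_div_iff h1, sub_mul, div_mul_cancel₀ _ h1]
              ring
            · simp only [List.length_cons, List.sum_cons] at hC'len ⊢
              push_cast at hC'len ⊢
              linarith

lemma map_sub_one_sum : ∀ L : List ℤ, (L.map (fun a => a - 1)).sum = L.sum - L.length
  | [] => by simp
  | a :: t => by
      simp only [List.map_cons, List.sum_cons, List.length_cons, map_sub_one_sum t]
      push_cast; ring

theorem stmt13 (p q : ℕ) (hq : 0 < q) (hqp : q < p) (hcop : Nat.Coprime p q)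
    (A C : List ℤ) (hA : IsNCF ((p : ℚ) / q) A) (hC : IsNCF ((p : ℚ) / (p - q)) C) :
    (C.length : ℤ) = (A.map (fun a => a - 1)).sum - A.length + 1 := by
  obtain ⟨hAne, hA2, hAev⟩ := hA
  obtain ⟨hCne, hC2, hCev⟩ := hC
  obtain ⟨D, hDne, hD2, hDev, hDlen⟩ :=
    exists_dual A.sum.toNat A le_rfl hAne hA2
  have hq0 : (q:ℚ) ≠ 0 := by positivity
  have hpq : ((p:ℚ) - q) ≠ 0 := by
    have : (q:ℚ) < p := by exact_mod_cast hqp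
    linarith
  have hval : ncfEval A / (ncfEval A - 1) = (p : ℚ) / (p - q) := by
    rw [hAev]
    rw [div_sub_one hq0]
    rw [div_div_div_eq, mul_comm (q:ℚ) ((p:ℚ) - q), mul_div_mul_right _ _ hq0]
  have hCD : C = D := by
    apply ncf_unique C D hC2 hD2 hCne hDne
    rw [hCev, hDev, hval]
  rw [hCD]
  have hmap : (A.map (fun a => a - 1)).sum = A.sum - A.length := map_sub_one_sum A
  rw [hmap, hDlen]
  ring
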